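/- Assume P is eventually positive, has SRLP with ratio-limit kernel H, and has Gerl's ratio limit property with spectral radius ρ > 0. Fix z ∈ G, n ∈ ℕ, and x, y ∈ G with μ^{*n}(x⁻¹y) > 0, and let ℓ²(I_z) be the real Hilbert space over I_z = {(m, w) : m ∈ ℕ, w ∈ G, μ^{*m}(w⁻¹z) > 0} with orthonormal basis e^{(m)}_{w,z}. Then every bounded linear operator D on ℓ²(I_z) satisfying, for all (m, w) ∈ I_z: D e^{(m)}_{w,z} = 0 if w ≠ y, and D e^{(m)}_{y,z} = (√(ρ^n·μ^{*m}(y⁻¹z)/μ^{*(n+m)}(x⁻¹z)) − √(H(x⁻¹y, x⁻¹z)))·e^{(n+m)}_{x,z} (the target index (n+m, x) lies in I_z since μ^{*(n+m)}(x⁻¹z) ≥ μ^{*n}(x⁻¹y)·μ^{*m}(y⁻¹z) > 0), is a compact operator. -/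

import Mathlib

open Filter Topology
open scoped Classical

noncomputable section

/-- The index set of the Fock fiber over z: pairs (m, w) with μ^{*m}(w⁻¹z) > 0. -/
def FockIndexAt {G : Type*} [Group G] (ν : ℕ → G → ℝ) (z : G) : Type _ :=
  {p : ℕ × G // 0 < ν p.1 (p.2⁻¹ * z)}

/-- The Fock fiber ℓ²(I_z) over z. -/
abbrev FockSpaceAt {G : Type*} [Group G] (ν : ℕ → G → ℝ) (z : G) : Type _ :=
  lp (fun _ : FockIndexAt ν z => ℝ) 2

/-- The orthonormal basis vector e^{(m)}_{w,z} of the Fock fiber over z. -/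
def fockVecAt {G : Type*} [Group G] (ν : ℕ → G → ℝ) (z : G) (i : FockIndexAt ν z) :
    FockSpaceAt ν z :=
  lp.single 2 i 1

section Aux

local notation "⟪" x ", " y "⟫" => @inner ℝ _ _ x y

variable {ι : Type*}

lemma fock_orthonormal :
    Orthonormal ℝ (fun i : ι => lp.single (E := fun _ : ι => ℝ) 2 i 1) := by
  rw [orthonormal_iff_ite]
  intro i j
  rw [lp.inner_single_left]
  rcases eq_or_ne i j with rfl | h
  · simp [lp.single_apply_self (E := fun _ : ι => ℝ), RCLike.inner_apply]
  · rw [lp.single_apply_ne (E := fun _ : ι => ℝ) 2 j (1:ℝ) h]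
    simp [RCLike.inner_apply, h]

lemma fock_inner_single (i : ι) (f : lp (fun _ : ι => ℝ) 2) :
    ⟪lp.single (E := fun _ : ι => ℝ) 2 i 1, f⟫ = f i := by
  rw [lp.inner_single_left]
  simp [RCLike.inner_apply]

/-- Key operator-norm bound for "weighted shift"-type operators given by values on the
standard basis of `ℓ²(ι)`. -/
lemma shift_bound (T : lp (fun _ : ι => ℝ) 2 →L[ℝ] lp (fun _ : ι => ℝ) 2)
    (s : Set ι) (σ : ι → ι) (hσ : Set.InjOn σ s) (d : ι → ℝ) (C : ℝ) (hC : 0 ≤ C)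
    (hd : ∀ i ∈ s, |d i| ≤ C)
    (hT0 : ∀ i ∉ s, T (lp.single 2 i 1) = 0)
    (hTs : ∀ i ∈ s, T (lp.single 2 i 1) = d i • lp.single 2 (σ i) 1)
    (g : lp (fun _ : ι => ℝ) 2) : ‖T g‖ ≤ C * ‖g‖ := by
  classical
  set v : ι → lp (fun _ : ι => ℝ) 2 := fun i => lp.single 2 i 1 with hv
  have hortho : Orthonormal ℝ v := fock_orthonormal
  have hite : ∀ a b : ι, ⟪v a, v b⟫ = if a = b then (1:ℝ) else 0 :=
    orthonormal_iff_ite.mp hortho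
  have hsingle : ∀ i : ι, lp.single (E := fun _ : ι => ℝ) 2 i (g i) = g i • v i := by
    intro i
    have : (g i : ℝ) = g i • (1:ℝ) := by simp
    rw [hv]
    rw [show lp.single (E := fun _ : ι => ℝ) 2 i (g i)
        = lp.single (E := fun _ : ι => ℝ) 2 i (g i • (1:ℝ)) by rw [← this]]
    exact lp.single_smul 2 i (g i) 1
  have hsum : HasSum (fun i : ι => lp.single 2 i (g i)) g :=
    lp.hasSum_single (by norm_num) g
  have hsum2 : HasSum (fun i : ι => T (lp.single 2 i (g i))) (T g) := hsum.mapL T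
  set t : ι → lp (fun _ : ι => ℝ) 2 := fun i => T (lp.single 2 i (g i)) with ht
  have ht_zero : ∀ i ∉ s, t i = 0 := by
    intro i hi
    rw [ht]; dsimp only
    rw [hsingle i, map_smul, hT0 i hi, smul_zero]
  have ht_mem : ∀ i ∈ s, t i = (g i * d i) • v (σ i) := by
    intro i hi
    rw [ht]; dsimp only
    rw [hsingle i, map_smul, hTs i hi, smul_smul]
  -- partial sums are bounded
  have hbound : ∀ A : Finset ι, ‖∑ i ∈ A, t i‖ ≤ C * ‖g‖ := by
    intro A
    set A' : Finset ι := A.filter (fun i => i ∈ s) with hA'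
    have hmem : ∀ i ∈ A', i ∈ s := fun i hi => (Finset.mem_filter.mp hi).2
    have hsum_eq1 : ∑ i ∈ A, t i = ∑ i ∈ A', t i :=
      (Finset.sum_filter_of_ne (fun i _ hne => by
        by_contra hi; exact hne (ht_zero i hi))).symm
    have hsum_eq : ∑ i ∈ A, t i = ∑ i ∈ A', (g i * d i) • v (σ i) :=
      hsum_eq1.trans (Finset.sum_congr rfl (fun i hi => ht_mem i (hmem i hi)))
    have hpyth : ‖∑ i ∈ A', (g i * d i) • v (σ i)‖ ^ 2 = ∑ i ∈ A', (g i * d i) ^ 2 := by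
      set S := ∑ i ∈ A', (g i * d i) • v (σ i) with hS
      have h1 : ⟪S, S⟫ = ∑ i ∈ A', (g i * d i) ^ 2 := by
        rw [hS]
        rw [sum_inner]
        refine Finset.sum_congr rfl (fun i hi => ?_)
        rw [real_inner_smul_left, inner_sum]
        rw [Finset.sum_eq_single i (fun j hj hne => by
            rw [real_inner_smul_right, hite (σ i) (σ j),
              if_neg (fun h => hne (hσ (hmem j hj) (hmem i hi) h.symm)), mul_zero])
          (fun h => absurd hi h)]
        rw [real_inner_smul_right, hite (σ i) (σ i), if_pos rfl]
        ring
      rw [← real_inner_self_eq_norm_sq, h1]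
    have hterm : ∀ i ∈ A', (g i * d i) ^ 2 ≤ C ^ 2 * (g i) ^ 2 := by
      intro i hi
      have h1 : (d i) ^ 2 ≤ C ^ 2 := by
        have := hd i (hmem i hi)
        calc (d i)^2 = |d i|^2 := (sq_abs _).symm
          _ ≤ C^2 := by nlinarith [abs_nonneg (d i)]
      calc (g i * d i) ^ 2 = (d i)^2 * (g i)^2 := by ring
        _ ≤ C^2 * (g i)^2 := by nlinarith [sq_nonneg (g i)]
    have hbessel : ∑ i ∈ A, (g i) ^ 2 ≤ ‖g‖ ^ 2 := by
      have := hortho.sum_inner_products_le (s := A) g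
      simpa [hv, fock_inner_single, Real.norm_eq_abs, sq_abs] using this
    have h2 : ‖∑ i ∈ A, t i‖ ^ 2 ≤ (C * ‖g‖) ^ 2 := by
      rw [hsum_eq, hpyth, mul_pow]
      calc ∑ i ∈ A', (g i * d i) ^ 2 ≤ ∑ i ∈ A', C^2 * (g i)^2 :=
            Finset.sum_le_sum hterm
        _ = C^2 * ∑ i ∈ A', (g i)^2 := by rw [Finset.mul_sum]
        _ ≤ C^2 * ∑ i ∈ A, (g i)^2 := by
            refine mul_le_mul_of_nonneg_left ?_ (sq_nonneg C)
            exact Finset.sum_le_sum_of_subset_of_nonneg (Finset.filter_subset _ _)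
              (fun i _ _ => sq_nonneg _)
        _ ≤ C^2 * ‖g‖^2 := mul_le_mul_of_nonneg_left hbessel (sq_nonneg C)
    exact (pow_le_pow_iff_left₀ (norm_nonneg _)
      (mul_nonneg hC (norm_nonneg _)) two_ne_zero).mp h2
  have htend : Tendsto (fun A : Finset ι => ‖∑ i ∈ A, t i‖) atTop (𝓝 ‖T g‖) :=
    hsum2.norm
  exact le_of_tendsto htend (Filter.Eventually.of_forall hbound)

lemma rankone_compact {E : Type*} [NormedAddCommGroup E] [NormedSpace ℝ E]
    (φ : E →L[ℝ] ℝ) (w : E) : IsCompactOperator ⇑(φ.smulRight w) := by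
  have hbase : IsCompactOperator ⇑(ContinuousLinearMap.toSpanSingleton ℝ w) := by
    rw [isCompactOperator_iff_exists_mem_nhds_image_subset_compact]
    refine ⟨Metric.closedBall 0 1, Metric.closedBall_mem_nhds 0 one_pos,
      (fun c : ℝ => c • w) '' Metric.closedBall 0 1,
      (isCompact_closedBall (0:ℝ) 1).image (continuous_id.smul continuous_const), ?_⟩
    rintro _ ⟨c, hc, rfl⟩
    exact ⟨c, hc, rfl⟩
  have heq : ⇑(φ.smulRight w) = ⇑(ContinuousLinearMap.toSpanSingleton ℝ w) ∘ ⇑φ := by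
    funext gg
    simp [ContinuousLinearMap.toSpanSingleton_apply, ContinuousLinearMap.smulRight_apply]
  rw [heq]
  exact hbase.comp_clm φ

lemma sum_compact {E : Type*} [NormedAddCommGroup E] [NormedSpace ℝ E]
    (F : Finset ι) (R : ι → E →L[ℝ] E) (h : ∀ i, IsCompactOperator ⇑(R i)) :
    IsCompactOperator ⇑(∑ i ∈ F, R i) := by
  classical
  induction F using Finset.cons_induction with
  | empty => simpa using (isCompactOperator_zero (M₁ := E) (M₂ := E))
  | cons a F ha ih =>
    rw [Finset.sum_cons]
    have := (h a).add ih
    simpa [ContinuousLinearMap.coe_add', ContinuousLinearMap.coe_sum'] using this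

end Aux

/-- on the fiber ℓ²(I_z), the difference between the restricted operators
T^{(n)}_{x,y} and W^{(n)}_{x,y} is a compact operator. -/
theorem stmt15 {G : Type*} [Group G] [Countable G]
(μ : G → ℝ) (hμnn : ∀ g : G, 0 ≤ μ g)
    (hμfin : (Function.support μ).Finite)
    (hμgen : Subsemigroup.closure (Function.support μ) = ⊤)
    (hμsum : ∑ᶠ g : G, μ g = 1)
    (ν : ℕ → G → ℝ)
    (hν0 : ∀ x : G, ν 0 x = if x = 1 then 1 else 0)
    (hνs : ∀ (m : ℕ) (x : G), ν (m + 1) x = ∑ᶠ g : G, ν m g * μ (g⁻¹ * x))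
(hev : ∀ y : G, ∃ m₀ : ℕ, ∀ m ≥ m₀, 0 < ν m y)
(H : G → G → ℝ)
    (hH : ∀ x y : G, Tendsto (fun m : ℕ => ν m (x⁻¹ * y) / ν m y) atTop (𝓝 (H x y)))
    (hHpos : ∀ x y : G, 0 < H x y)
(ρ : ℝ) (hρ : 0 < ρ)
    (hGerl : ∀ w : G, Tendsto (fun m : ℕ => ν (m + 1) w / ν m w) atTop (𝓝 ρ))
    (z : G) (n : ℕ) (x y : G) (hxy : 0 < ν n (x⁻¹ * y))
    (D : FockSpaceAt ν z →L[ℝ] FockSpaceAt ν z)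
    (hD0 : ∀ (m : ℕ) (w : G) (h : 0 < ν m (w⁻¹ * z)),
      w ≠ y → D (fockVecAt ν z ⟨(m, w), h⟩) = 0)
    (hDy : ∀ (m : ℕ) (h : 0 < ν m (y⁻¹ * z)) (h' : 0 < ν (n + m) (x⁻¹ * z)),
      D (fockVecAt ν z ⟨(m, y), h⟩) =
        (Real.sqrt (ρ ^ n * ν m (y⁻¹ * z) / ν (n + m) (x⁻¹ * z)) -
            Real.sqrt (H (x⁻¹ * y) (x⁻¹ * z))) • fockVecAt ν z ⟨(n + m, x), h'⟩) :
    IsCompactOperator (⇑D) := by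
  classical
  obtain ⟨m₁, hm₁⟩ := hev (x⁻¹ * z)
  set d : ℕ → ℝ := fun m => Real.sqrt (ρ ^ n * ν m (y⁻¹ * z) / ν (n + m) (x⁻¹ * z)) -
      Real.sqrt (H (x⁻¹ * y) (x⁻¹ * z)) with hd
  -- Step 1: the coefficients tend to 0
  have hy0 : Tendsto (fun m : ℕ => ν m (y⁻¹ * z) / ν m (x⁻¹ * z)) atTop
      (𝓝 (H (x⁻¹ * y) (x⁻¹ * z))) := by
    have h0 := hH (x⁻¹ * y) (x⁻¹ * z)
    have he : ∀ m : ℕ, ν m ((x⁻¹ * y)⁻¹ * (x⁻¹ * z)) = ν m (y⁻¹ * z) := by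
      intro m; congr 1; group
    simp only [he] at h0
    exact h0
  have hratio : ∀ k : ℕ, Tendsto (fun m : ℕ => ν (k + m) (x⁻¹ * z) / ν m (x⁻¹ * z))
      atTop (𝓝 (ρ ^ k)) := by
    intro k
    induction k with
    | zero =>
      simp only [zero_add, pow_zero]
      refine Tendsto.congr' ?_ tendsto_const_nhds
      filter_upwards [eventually_ge_atTop m₁] with m hm
      exact (div_self (hm₁ m hm).ne').symm
    | succ k ih =>
      have hcomp : Tendsto (fun m : ℕ => k + m) atTop atTop := by
        simpa [add_comm] using tendsto_add_atTop_nat k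
      have h1 : Tendsto (fun m : ℕ => ν ((k + m) + 1) (x⁻¹ * z) / ν (k + m) (x⁻¹ * z))
          atTop (𝓝 ρ) := (hGerl (x⁻¹ * z)).comp hcomp
      rw [show ρ ^ (k + 1) = ρ * ρ ^ k from by ring]
      refine Tendsto.congr' ?_ (h1.mul ih)
      filter_upwards [eventually_ge_atTop m₁] with m hm
      have hb : ν (k + m) (x⁻¹ * z) ≠ 0 := (hm₁ (k + m) (by omega)).ne'
      rw [div_mul_div_comm, mul_comm (ν ((k + m) + 1) (x⁻¹ * z)) (ν (k + m) (x⁻¹ * z)),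
        mul_div_mul_left _ _ hb, show (k + m) + 1 = k + 1 + m from by omega]
  have hone : Tendsto (fun m : ℕ => ρ ^ n * ν m (x⁻¹ * z) / ν (n + m) (x⁻¹ * z))
      atTop (𝓝 1) := by
    have h1 := (tendsto_const_nhds (x := ρ ^ n) (f := atTop (α := ℕ))).div (hratio n)
      (pow_ne_zero n hρ.ne')
    rw [div_self (pow_ne_zero n hρ.ne')] at h1
    exact Tendsto.congr (fun m => div_div_eq_mul_div _ _ _) h1
  have hlim : Tendsto (fun m : ℕ => ρ ^ n * ν m (y⁻¹ * z) / ν (n + m) (x⁻¹ * z)) atTop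
      (𝓝 (H (x⁻¹ * y) (x⁻¹ * z))) := by
    have h2 := hy0.mul hone
    rw [mul_one] at h2
    refine Tendsto.congr' ?_ h2
    filter_upwards [eventually_ge_atTop m₁] with m hm
    have hc : ν m (x⁻¹ * z) ≠ 0 := (hm₁ m hm).ne'
    have hb : ν (n + m) (x⁻¹ * z) ≠ 0 := (hm₁ (n + m) (by omega)).ne'
    rw [div_mul_div_comm,
      show ν m (y⁻¹ * z) * (ρ ^ n * ν m (x⁻¹ * z))
          = (ρ ^ n * ν m (y⁻¹ * z)) * ν m (x⁻¹ * z) from by ring,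
      show ν m (x⁻¹ * z) * ν (n + m) (x⁻¹ * z)
          = ν (n + m) (x⁻¹ * z) * ν m (x⁻¹ * z) from by ring,
      mul_div_mul_right _ _ hc]
  have hd0 : Tendsto d atTop (𝓝 0) := by
    have hs := (Real.continuous_sqrt.tendsto _).comp hlim
    have h3 := hs.sub (tendsto_const_nhds
      (x := Real.sqrt (H (x⁻¹ * y) (x⁻¹ * z))) (f := atTop (α := ℕ)))
    simpa [hd, Function.comp, sub_self] using h3
  -- Step 2: orthonormal basis and finite-rank approximants
  set v : FockIndexAt ν z → FockSpaceAt ν z := fun i => fockVecAt ν z i with hv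
  have hortho : Orthonormal ℝ v := fock_orthonormal
  have hite : ∀ a b : FockIndexAt ν z, (inner ℝ (v a) (v b) : ℝ) = if a = b then (1:ℝ) else 0 :=
    orthonormal_iff_ite.mp hortho
  have hfin : ∀ N : ℕ, {i : FockIndexAt ν z | i.1.1 ≤ N ∧ i.1.2 = y}.Finite := by
    intro N
    refine Set.Finite.of_finite_image (f := fun i : FockIndexAt ν z => i.1.1) ?_ ?_
    · exact (Set.finite_Iic N).subset (by rintro _ ⟨i, ⟨h1, _⟩, rfl⟩; exact h1)
    · rintro i ⟨h1, h2⟩ j ⟨h3, h4⟩ hij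
      exact Subtype.ext (Prod.ext hij (h2.trans h4.symm))
  set FS : ℕ → Finset (FockIndexAt ν z) := fun N => (hfin N).toFinset with hFS
  set DN : ℕ → (FockSpaceAt ν z →L[ℝ] FockSpaceAt ν z) := fun N =>
    ∑ i ∈ FS N, ((innerSL ℝ (v i)).smulRight (D (v i))) with hDN
  have hDNc : ∀ N, IsCompactOperator ⇑(DN N) :=
    fun N => sum_compact _ _ (fun i => rankone_compact _ _)
  have hDNapply : ∀ N (j : FockIndexAt ν z),
      (DN N) (v j) = if j ∈ FS N then D (v j) else 0 := by
    intro N j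
    rw [hDN]
    simp only [ContinuousLinearMap.sum_apply, ContinuousLinearMap.smulRight_apply,
      innerSL_apply_apply]
    have hterm : ∀ i : FockIndexAt ν z,
        (inner ℝ (v i) (v j) : ℝ) • D (v i) = if i = j then D (v i) else 0 := by
      intro i; rw [hite i j]; split_ifs <;> simp
    simp only [hterm]
    exact Finset.sum_ite_eq' (FS N) j (fun i => D (v i))
  -- Step 3: norm approximation
  have happrox : ∀ ε : ℝ, 0 < ε → ∃ N : ℕ, ‖D - DN N‖ ≤ ε := by
    intro ε hε
    obtain ⟨N₀, hN₀⟩ := (Metric.tendsto_atTop.mp hd0) ε hε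
    set N := max N₀ m₁ with hN
    have hm₁N : m₁ ≤ N := le_max_right _ _
    have hN₀N : N₀ ≤ N := le_max_left _ _
    refine ⟨N, ContinuousLinearMap.opNorm_le_bound _ hε.le (fun g => ?_)⟩
    set s : Set (FockIndexAt ν z) := {i | i.1.2 = y ∧ N < i.1.1} with hsdef
    have key : ∀ i ∈ s, 0 < ν (n + i.1.1) (x⁻¹ * z) := by
      intro i hi
      obtain ⟨-, h2⟩ := hi
      exact hm₁ _ (by omega)
    set σ : FockIndexAt ν z → FockIndexAt ν z := fun i =>
      if h : 0 < ν (n + i.1.1) (x⁻¹ * z) then ⟨(n + i.1.1, x), h⟩ else i with hσdef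
    have hσinj : Set.InjOn σ s := by
      intro i hi j hj hij
      rw [hσdef] at hij
      dsimp only at hij
      replace hij : (⟨(n + i.1.1, x), key i hi⟩ : FockIndexAt ν z) = ⟨(n + j.1.1, x), key j hj⟩ :=
        (dif_pos (key i hi)).symm.trans (hij.trans (dif_pos (key j hj)))
      have h1 : n + i.1.1 = n + j.1.1 := congrArg (fun t : FockIndexAt ν z => t.1.1) hij
      exact Subtype.ext (Prod.ext (by omega) (hi.1.trans hj.1.symm))
    have hT0 : ∀ i ∉ s, (D - DN N) (v i) = 0 := by
      intro i hi
      rw [ContinuousLinearMap.sub_apply, hDNapply N i]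
      rcases i with ⟨⟨m, u⟩, hpos⟩
      by_cases hu : u = y
      · have hmN : m ≤ N := by
          by_contra hc
          exact hi ⟨hu, show N < m by omega⟩
        have hmem : (⟨(m, u), hpos⟩ : FockIndexAt ν z) ∈ FS N := by
          rw [hFS]; exact (hfin N).mem_toFinset.mpr ⟨hmN, hu⟩
        split_ifs with hc
        · exact sub_self _
        · exact absurd hmem hc
      · have hnm : (⟨(m, u), hpos⟩ : FockIndexAt ν z) ∉ FS N := by
          rw [hFS]
          intro hc
          exact hu ((hfin N).mem_toFinset.mp hc).2
        split_ifs with hc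
        · exact absurd hc hnm
        · exact (sub_zero _).trans (hD0 m u hpos hu)
    have hTs : ∀ i ∈ s, (D - DN N) (v i) = (fun i : FockIndexAt ν z => d i.1.1) i • v (σ i) := by
      intro i hi
      have h' : 0 < ν (n + i.1.1) (x⁻¹ * z) := key i hi
      have hnm : i ∉ FS N := by
        rw [hFS]
        intro hc
        have := ((hfin N).mem_toFinset.mp hc).1
        exact absurd hi.2 (by omega)
      rw [ContinuousLinearMap.sub_apply, hDNapply N i, if_neg hnm, sub_zero]
      obtain ⟨⟨m, u⟩, hpos⟩ := i
      have hu : u = y := hi.1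
      subst hu
      rw [hv]
      dsimp only
      rw [hDy m hpos h']
      congr 1
      rw [hσdef]
      dsimp only
      exact congrArg (fockVecAt ν z) (dif_pos h').symm
    have hd_small : ∀ i ∈ s, |(fun i : FockIndexAt ν z => d i.1.1) i| ≤ ε := by
      intro i hi
      have := hN₀ i.1.1 (by have := hi.2; omega)
      rw [Real.dist_eq, sub_zero] at this
      exact this.le
    exact shift_bound (D - DN N) s σ hσinj (fun i => d i.1.1) ε hε.le hd_small hT0 hTs g
  -- Step 4: conclude compactness
  have hseq : ∀ k : ℕ, ∃ A : FockSpaceAt ν z →L[ℝ] FockSpaceAt ν z,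
      IsCompactOperator ⇑A ∧ ‖D - A‖ ≤ 1 / (k + 1) := by
    intro k
    obtain ⟨N, hN⟩ := happrox (1 / (k + 1)) (by positivity)
    exact ⟨DN N, hDNc N, hN⟩
  choose Cop hC1 hC2 using hseq
  have htend : Tendsto Cop atTop (𝓝 D) := by
    rw [tendsto_iff_dist_tendsto_zero]
    refine squeeze_zero (fun k => dist_nonneg) (fun k => ?_)
      tendsto_one_div_add_atTop_nhds_zero_nat
    rw [dist_eq_norm, norm_sub_rev]
    exact hC2 k
  exact isCompactOperator_of_tendsto htend (Filter.Eventually.of_forall hC1)
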